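/- Combination lemma: let V be a finite type, g₁ and g₂ specifications on V, and h₁, h₂ ∈ FreeGroup V words solving g₁ and g₂ respectively. Suppose that for every S : Finset V at which both ¬g₁ S and ¬g₂ S hold, the specifications g₁ and g₂ separate above S. Then h₁ · h₂ solves the pointwise conjunction g₁ ∧ g₂, and the commutator ⁅h₁, h₂⁆ solves the pointwise disjunction g₁ ∨ g₂. -/

import Mathlib

/-- The removal homomorphism: kills the generators with index in `S`. -/
def kill {V : Type*} [DecidableEq V] (S : Finset V) : FreeGroup V →* FreeGroup V :=
  FreeGroup.lift fun i => if i ∈ S then 1 else FreeGroup.of i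

/-- `f` is a specification on `V`: a monotone predicate on removal sets that holds
when all nails are removed. -/
def IsSpec {V : Type*} [Fintype V] (f : Finset V → Prop) : Prop :=
  (∀ S S' : Finset V, S ⊆ S' → f S → f S') ∧ f Finset.univ

/-- `h` solves the specification `f`. -/
def Solves {V : Type*} [Fintype V] [DecidableEq V] (h : FreeGroup V) (f : Finset V → Prop) : Prop :=
  ∀ S : Finset V, kill S h = 1 ↔ f S

/-- `g₁` and `g₂` separate above `S`: they disagree at some superset of `S`. -/
def SeparateAbove {V : Type*} (g₁ g₂ : Finset V → Prop) (S : Finset V) : Prop :=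
  ∃ S' : Finset V, S ⊆ S' ∧ ¬(g₁ S' ↔ g₂ S')

open scoped commutatorElement

/-! ### Auxiliary free-group lemmas -/

/-- Two generators of a free group commute only if they are equal. -/
lemma eq_of_commute_of {X : Type*} {x y : X}
    (h : Commute (FreeGroup.of x) (FreeGroup.of y)) : x = y := by
  by_contra hxy
  classical
  set f : X → Equiv.Perm (Fin 3) := fun z =>
    if z = x then Equiv.swap 0 1 else if z = y then Equiv.swap 1 2 else 1 with hf
  have h' := congrArg (FreeGroup.lift f) h.eq
  rw [map_mul, map_mul, FreeGroup.lift_apply_of, FreeGroup.lift_apply_of] at h'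
  have hx : f x = Equiv.swap 0 1 := by simp [hf]
  have hy : f y = Equiv.swap 1 2 := by simp [hf, Ne.symm hxy]
  rw [hx, hy] at h'
  exact absurd h' (by decide)

lemma fg_eq_one_of_isEmpty {X : Type*} [IsEmpty X] (g : FreeGroup X) : g = 1 := by
  induction g with
  | C1 => rfl
  | of x => exact isEmptyElim x
  | inv_of x _ => exact isEmptyElim x
  | mul x y hx hy => rw [hx, hy, one_mul]

lemma fg_eq_zpow_of_subsingleton {X : Type*} [Subsingleton X] (x₀ : X) (g : FreeGroup X) :
    ∃ n : ℤ, g = FreeGroup.of x₀ ^ n := by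
  induction g with
  | C1 => exact ⟨0, rfl⟩
  | of x => exact ⟨1, by rw [Subsingleton.elim x x₀]; simp⟩
  | inv_of x _ =>
    exact ⟨-1, by rw [Subsingleton.elim x x₀]; simp⟩
  | mul a b ha hb =>
    obtain ⟨m, hm⟩ := ha
    obtain ⟨n, hn⟩ := hb
    exact ⟨m + n, by rw [hm, hn, zpow_add]⟩

lemma fg_of_zpow_eq_one {X : Type*} (x₀ : X) {n : ℤ}
    (h : FreeGroup.of x₀ ^ n = 1) : n = 0 := by
  have h' := congrArg (FreeGroup.lift fun _ : X => (Multiplicative.ofAdd (1 : ℤ))) h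
  rw [map_zpow, FreeGroup.lift_apply_of, (FreeGroup.lift _).map_one, ← ofAdd_zsmul] at h'
  have h2 := Multiplicative.ofAdd.injective (h'.trans (ofAdd_zero).symm)
  simpa using h2

/-- Every subgroup of a free group, if commutative as a group, lands in a
cyclic/torsion-free picture. First: torsion-freeness of free groups. -/
lemma freeGroup_zpow_eq_one {W : Type*} {a : FreeGroup W} {n : ℤ}
    (hn : n ≠ 0) (h : a ^ n = 1) : a = 1 := by
  classical
  set H := Subgroup.zpowers a with hH
  haveI : IsFreeGroup H := subgroupIsFreeOfIsFree H
  set e := IsFreeGroup.toFreeGroup H with he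
  set X := IsFreeGroup.Generators H with hX
  -- H is commutative
  have hcomm : ∀ g h : H, g * h = h * g := by
    rintro ⟨g, hg⟩ ⟨k, hk⟩
    obtain ⟨i, rfl⟩ := Subgroup.mem_zpowers_iff.mp hg
    obtain ⟨j, rfl⟩ := Subgroup.mem_zpowers_iff.mp hk
    ext
    exact (zpow_mul_comm a i j)
  have hcommX : ∀ g k : FreeGroup X, g * k = k * g := by
    intro g k
    have := hcomm (e.symm g) (e.symm k)
    have := congrArg e this
    simpa using this
  haveI : Subsingleton X := ⟨fun x y => eq_of_commute_of (hcommX _ _)⟩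
  have ha : (⟨a, Subgroup.mem_zpowers a⟩ : H) ^ n = 1 := by
    ext
    push_cast
    exact h
  rcases isEmpty_or_nonempty X with hE | hNe
  · have : e ⟨a, Subgroup.mem_zpowers a⟩ = 1 := fg_eq_one_of_isEmpty _
    have : (⟨a, Subgroup.mem_zpowers a⟩ : H) = 1 := by
      apply e.injective; simpa using this
    exact congrArg Subtype.val this
  · obtain ⟨x₀⟩ := hNe
    obtain ⟨m, hm⟩ := fg_eq_zpow_of_subsingleton x₀ (e ⟨a, Subgroup.mem_zpowers a⟩)
    have hpow : FreeGroup.of x₀ ^ (m * n) = 1 := by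
      rw [zpow_mul, ← hm, ← map_zpow, ha, map_one]
    have hmn := fg_of_zpow_eq_one x₀ hpow
    have hm0 : m = 0 := by
      rcases mul_eq_zero.mp hmn with h0 | h0
      · exact h0
      · exact absurd h0 hn
    have : e ⟨a, Subgroup.mem_zpowers a⟩ = 1 := by rw [hm, hm0, zpow_zero]
    have : (⟨a, Subgroup.mem_zpowers a⟩ : H) = 1 := by
      apply e.injective; simpa using this
    exact congrArg Subtype.val this

/-- Commuting elements of a free group are powers of a common element. -/
lemma commute_common_power {V : Type*} {a b : FreeGroup V} (hab : Commute a b) :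
    ∃ (d : FreeGroup V) (m p : ℤ), a = d ^ m ∧ b = d ^ p := by
  classical
  set H := Subgroup.closure {a, b} with hH
  have haH : a ∈ H := Subgroup.subset_closure (by simp)
  have hbH : b ∈ H := Subgroup.subset_closure (by simp)
  -- H is commutative
  have step1 : H ≤ Subgroup.centralizer {a, b} := by
    rw [hH, Subgroup.closure_le]
    rintro z (rfl | hz)
    · rw [SetLike.mem_coe, Subgroup.mem_centralizer_iff]
      rintro w (rfl | hw)
      · rfl
      · simp only [Set.mem_singleton_iff] at hw; subst hw
        exact hab.symm.eq
    · simp only [Set.mem_singleton_iff] at hz; subst hz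
      rw [SetLike.mem_coe, Subgroup.mem_centralizer_iff]
      rintro w (rfl | hw)
      · exact hab.eq
      · simp only [Set.mem_singleton_iff] at hw; subst hw
        rfl
  have step2 : H ≤ Subgroup.centralizer (H : Set (FreeGroup V)) := by
    rw [hH, Subgroup.closure_le]
    rintro z (rfl | hz)
    · rw [SetLike.mem_coe, Subgroup.mem_centralizer_iff]
      intro w hw
      have := Subgroup.mem_centralizer_iff.mp (step1 hw) z (by simp)
      exact this.symm
    · simp only [Set.mem_singleton_iff] at hz; subst hz
      rw [SetLike.mem_coe, Subgroup.mem_centralizer_iff]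
      intro w hw
      have := Subgroup.mem_centralizer_iff.mp (step1 hw) z (by simp)
      exact this.symm
  have hcomm : ∀ g k : H, g * k = k * g := by
    rintro ⟨g, hg⟩ ⟨k, hk⟩
    ext
    exact Subgroup.mem_centralizer_iff.mp (step2 hk) g hg
  haveI : IsFreeGroup H := subgroupIsFreeOfIsFree H
  set e := IsFreeGroup.toFreeGroup H with he
  set X := IsFreeGroup.Generators H with hX
  have hcommX : ∀ g k : FreeGroup X, g * k = k * g := by
    intro g k
    have := congrArg e (hcomm (e.symm g) (e.symm k))
    simpa using this
  haveI : Subsingleton X := ⟨fun x y => eq_of_commute_of (hcommX _ _)⟩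
  rcases isEmpty_or_nonempty X with hE | hNe
  · refine ⟨1, 0, 0, ?_, ?_⟩
    · have : e ⟨a, haH⟩ = 1 := fg_eq_one_of_isEmpty _
      have : (⟨a, haH⟩ : H) = 1 := by apply e.injective; simpa using this
      simpa using congrArg Subtype.val this
    · have : e ⟨b, hbH⟩ = 1 := fg_eq_one_of_isEmpty _
      have : (⟨b, hbH⟩ : H) = 1 := by apply e.injective; simpa using this
      simpa using congrArg Subtype.val this
  · obtain ⟨x₀⟩ := hNe
    obtain ⟨m, hm⟩ := fg_eq_zpow_of_subsingleton x₀ (e ⟨a, haH⟩)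
    obtain ⟨p, hp⟩ := fg_eq_zpow_of_subsingleton x₀ (e ⟨b, hbH⟩)
    refine ⟨(e.symm (FreeGroup.of x₀) : H), m, p, ?_, ?_⟩
    · have : (⟨a, haH⟩ : H) = (e.symm (FreeGroup.of x₀)) ^ m := by
        apply e.injective
        rw [map_zpow, MulEquiv.apply_symm_apply, ← hm]
      have := congrArg Subtype.val this
      simpa using this
    · have : (⟨b, hbH⟩ : H) = (e.symm (FreeGroup.of x₀)) ^ p := by
        apply e.injective
        rw [map_zpow, MulEquiv.apply_symm_apply, ← hp]
      have := congrArg Subtype.val this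
      simpa using this

/-- If `a` and `b` commute in a free group, `a ≠ 1`, and a homomorphism kills `a`,
then it kills `b` as well. -/
lemma kill_of_commute {V W : Type*} {a b : FreeGroup V} (hab : Commute a b)
    (ha : a ≠ 1) (k : FreeGroup V →* FreeGroup W) (hka : k a = 1) : k b = 1 := by
  obtain ⟨d, m, p, rfl, rfl⟩ := commute_common_power hab
  have hm : m ≠ 0 := by rintro rfl; simp at ha
  rw [map_zpow] at hka ⊢
  rw [freeGroup_zpow_eq_one hm hka, one_zpow]

/-! ### Properties of `kill` -/

lemma kill_of {V : Type*} [DecidableEq V] (S : Finset V) (i : V) :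
    kill S (FreeGroup.of i) = if i ∈ S then 1 else FreeGroup.of i :=
  FreeGroup.lift_apply_of

lemma kill_kill {V : Type*} [DecidableEq V] {S S' : Finset V} (hSS : S ⊆ S')
    (x : FreeGroup V) : kill S' (kill S x) = kill S' x := by
  have : (kill S').comp (kill S) = kill S' := by
    apply FreeGroup.ext_hom
    intro i
    simp only [MonoidHom.comp_apply, kill_of]
    by_cases hi : i ∈ S
    · rw [if_pos hi, map_one, if_pos (hSS hi)]
    · rw [if_neg hi, kill_of]
  exact DFunLike.congr_fun this x

theorem combination_lemma {V : Type*} [Fintype V] [DecidableEq V]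
    (g₁ g₂ : Finset V → Prop) (hg₁ : IsSpec g₁) (hg₂ : IsSpec g₂)
    (h₁ h₂ : FreeGroup V) (hs₁ : Solves h₁ g₁) (hs₂ : Solves h₂ g₂)
    (hsep : ∀ S : Finset V, ¬g₁ S → ¬g₂ S → SeparateAbove g₁ g₂ S) :
    Solves (h₁ * h₂) (fun S => g₁ S ∧ g₂ S) ∧
    Solves ⁅h₁, h₂⁆ (fun S => g₁ S ∨ g₂ S) := by
  constructor
  · -- product solves conjunction
    intro S
    rw [map_mul]
    constructor
    · intro hmul
      by_cases hg1S : g₁ S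
      · have h1 : kill S h₁ = 1 := (hs₁ S).mpr hg1S
        have h2 : kill S h₂ = 1 := by rwa [h1, one_mul] at hmul
        exact ⟨hg1S, (hs₂ S).mp h2⟩
      · by_cases hg2S : g₂ S
        · have h2 : kill S h₂ = 1 := (hs₂ S).mpr hg2S
          have h1 : kill S h₁ = 1 := by rwa [h2, mul_one] at hmul
          exact absurd ((hs₁ S).mp h1) hg1S
        · obtain ⟨S', hsub, hne⟩ := hsep S hg1S hg2S
          have hmul' : kill S' h₁ * kill S' h₂ = 1 := by
            have := congrArg (kill S') hmul
            rwa [map_mul, kill_kill hsub, kill_kill hsub, map_one] at this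
          exfalso
          by_cases hg1 : g₁ S'
          · have h1 : kill S' h₁ = 1 := (hs₁ S').mpr hg1
            have h2 : kill S' h₂ = 1 := by rwa [h1, one_mul] at hmul'
            exact hne ⟨fun _ => (hs₂ S').mp h2, fun _ => hg1⟩
          · by_cases hg2 : g₂ S'
            · have h2 : kill S' h₂ = 1 := (hs₂ S').mpr hg2
              have h1 : kill S' h₁ = 1 := by rwa [h2, mul_one] at hmul'
              exact hg1 ((hs₁ S').mp h1)
            · exact hne ⟨fun h => absurd h hg1, fun h => absurd h hg2⟩
    · rintro ⟨hg1S, hg2S⟩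
      rw [(hs₁ S).mpr hg1S, (hs₂ S).mpr hg2S, one_mul]
  · -- commutator solves disjunction
    intro S
    have hkc : kill S ⁅h₁, h₂⁆ = ⁅kill S h₁, kill S h₂⁆ := by
      simp [commutatorElement_def, map_mul, map_inv]
    rw [hkc]
    constructor
    · intro hc
      by_contra hor
      obtain ⟨hg1S, hg2S⟩ := not_or.mp hor
      have ha : kill S h₁ ≠ 1 := fun h => hg1S ((hs₁ S).mp h)
      have hb : kill S h₂ ≠ 1 := fun h => hg2S ((hs₂ S).mp h)
      have hcomm : Commute (kill S h₁) (kill S h₂) :=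
        commutatorElement_eq_one_iff_commute.mp hc
      obtain ⟨S', hsub, hne⟩ := hsep S hg1S hg2S
      by_cases hg1 : g₁ S'
      · -- g₁ S' and ¬ g₂ S'
        have hg2 : ¬g₂ S' := fun h => hne ⟨fun _ => h, fun _ => hg1⟩
        have h1 : kill S' (kill S h₁) = 1 := by
          rw [kill_kill hsub]; exact (hs₁ S').mpr hg1
        have h2 : kill S' (kill S h₂) = 1 :=
          kill_of_commute hcomm ha (kill S') h1
        rw [kill_kill hsub] at h2
        exact hg2 ((hs₂ S').mp h2)
      · have hg2 : g₂ S' := by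
          by_contra hg2
          exact hne ⟨fun h => absurd h hg1, fun h => absurd h hg2⟩
        have h2 : kill S' (kill S h₂) = 1 := by
          rw [kill_kill hsub]; exact (hs₂ S').mpr hg2
        have h1 : kill S' (kill S h₁) = 1 :=
          kill_of_commute hcomm.symm hb (kill S') h2
        rw [kill_kill hsub] at h1
        exact hg1 ((hs₁ S').mp h1)
    · intro hor
      rcases hor with h | h
      · rw [(hs₁ S).mpr h, commutatorElement_one_left]
      · rw [(hs₂ S).mpr h, commutatorElement_one_right]
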